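/- Let V and g be finite-dimensional real vector spaces, let π : V* → V be a linear map that is skew in the sense that β(π(α)) = −α(π(β)) for all α, β ∈ V*, let μ : V → g* be linear, let μᵀ : g → V* be its transpose defined by μᵀ(v)(u) := μ(u)(v), and set a := π ∘ μᵀ : g → V. Assume a(v) ∈ ker μ for every v ∈ g. Then, writing W := ker μ, one has {w ∈ W : there exists α ∈ V* with α vanishing on W and π(α) = w} = a(g). -/

import Mathlib

/-- Let `V` and `g` be finite-dimensional real vector spaces, `π : V* → V` a skew
linear map, `μ : V → g*` linear, `μᵀ : g → V*` its transpose, and `a := π ∘ μᵀ`.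
Assume `a(v) ∈ ker μ` for all `v`.  Then, with `W := ker μ`,
`{w ∈ W : ∃ α ∈ W°, π(α) = w} = a(g)`. -/
theorem kernel_of_pullback_dirac_eq_image
    {V g : Type*} [AddCommGroup V] [Module ℝ V] [FiniteDimensional ℝ V]
    [AddCommGroup g] [Module ℝ g] [FiniteDimensional ℝ g]
    (π : Module.Dual ℝ V →ₗ[ℝ] V)
    (hπ : ∀ α β : Module.Dual ℝ V, β (π α) = - α (π β))
    (μ : V →ₗ[ℝ] Module.Dual ℝ g)
    (a : g →ₗ[ℝ] V)
    (ha : a = π ∘ₗ μ.flip)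
    (hker : ∀ v : g, a v ∈ LinearMap.ker μ) :
    {w : V | w ∈ LinearMap.ker μ ∧
        ∃ α : Module.Dual ℝ V, (∀ u ∈ LinearMap.ker μ, α u = 0) ∧ π α = w}
      = Set.range a := by
  ext w
  constructor
  · rintro ⟨hw, α, hα, rfl⟩
    -- α annihilates ker μ, hence α ∈ range μ.dualMap
    have hmem : α ∈ (LinearMap.ker μ).dualAnnihilator := by
      rw [Submodule.mem_dualAnnihilator]; exact hα
    rw [← LinearMap.range_dualMap_eq_dualAnnihilator_ker] at hmem
    obtain ⟨ξ, hξ⟩ := hmem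
    obtain ⟨v, rfl⟩ := (Module.evalEquiv ℝ g).surjective ξ
    refine ⟨v, ?_⟩
    have : μ.flip v = α := by
      ext u
      simpa [LinearMap.dualMap, Module.evalEquiv, Module.Dual.eval, Module.Dual.transpose_apply] using
        congrFun (congrArg (fun f => f.toFun) hξ) u
    rw [ha]
    simp [this]
  · rintro ⟨v, rfl⟩
    refine ⟨hker v, μ.flip v, ?_, by rw [ha]; rfl⟩
    intro u hu
    simp only [LinearMap.flip_apply]
    rw [LinearMap.mem_ker] at hu
    simp [hu]
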